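/- arXiv:1002.3735 — 2 statements merged into one kernel-verified Lean document; each statement's English description precedes it below -/
import Mathlib

section
/- Let V : ℕ → ℤ[T,T⁻¹] satisfy the Jones recurrence V(m+2) = (T³ − T)·V(m+1) + T⁴·V(m) for all m. Suppose V(0) ≠ 0 and the pair (V(0), V(1)) is critical, i.e. deg V(1) = 1 + deg V(0), and let C be the sum of the leading coefficients of V(0) and V(1). If C ≠ 0, then: (i) for every m ≥ 1, the pair (V(m), V(m+1)) is stable; (ii) for every m ≥ 1, deg V(m) = deg V(1) + 3·(m − 1); (iii) for every m ≥ 2, the leading coefficient of V(m) equals C. -/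
/-- The degree of a Laurent polynomial `f`, viewed as a finitely supported function
`ℤ → ℤ`: the maximum of its support in `WithBot ℤ` (so `jdeg 0 = ⊥`). -/
noncomputable def jdeg (f : LaurentPolynomial ℤ) : WithBot ℤ :=
  (AddMonoidAlgebra.coeff f : ℤ →₀ ℤ).support.max

/-- The leading coefficient of a Laurent polynomial: its coefficient at `jdeg f`
(for `f ≠ 0`; by convention `jcoeff 0 = 0`). -/
noncomputable def jcoeff (f : LaurentPolynomial ℤ) : ℤ :=
  (AddMonoidAlgebra.coeff f : ℤ →₀ ℤ) (WithBot.unbotD 0 ((AddMonoidAlgebra.coeff f : ℤ →₀ ℤ).support.max))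

namespace JonesAux
open LaurentPolynomial

noncomputable def ap (f : LaurentPolynomial ℤ) (k : ℤ) : ℤ := (AddMonoidAlgebra.coeff f : ℤ →₀ ℤ) k

lemma ap_add (f g : LaurentPolynomial ℤ) (k : ℤ) : ap (f + g) k = ap f k + ap g k := rfl
lemma ap_sub (f g : LaurentPolynomial ℤ) (k : ℤ) : ap (f - g) k = ap f k - ap g k := rfl

lemma ap_T_mul (n : ℤ) (f : LaurentPolynomial ℤ) (k : ℤ) :
    ap (T n * f) k = ap f (k - n) := by
  show (AddMonoidAlgebra.coeff (AddMonoidAlgebra.single n (1:ℤ) * f)) k = (AddMonoidAlgebra.coeff f : ℤ →₀ ℤ) (k - n)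
  rw [AddMonoidAlgebra.coeff_single_mul_apply, one_mul, neg_add_eq_sub]

/-- `f` has degree `d`: nonzero coefficient at `d`, zero above. -/
def Lead (f : LaurentPolynomial ℤ) (d : ℤ) : Prop :=
  ap f d ≠ 0 ∧ ∀ k, d < k → ap f k = 0

lemma jdeg_eq_of_lead {f : LaurentPolynomial ℤ} {d : ℤ} (h : Lead f d) :
    jdeg f = (d : WithBot ℤ) := by
  apply le_antisymm
  · apply Finset.max_le
    intro k hk
    rw [Finsupp.mem_support_iff] at hk
    exact_mod_cast not_lt.1 fun hlt => hk (h.2 k hlt)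
  · exact Finset.le_max (Finsupp.mem_support_iff.2 h.1)

lemma jcoeff_eq_of_lead {f : LaurentPolynomial ℤ} {d : ℤ} (h : Lead f d) :
    jcoeff f = ap f d := by
  have hd : (AddMonoidAlgebra.coeff f : ℤ →₀ ℤ).support.max = (d : WithBot ℤ) := jdeg_eq_of_lead h
  unfold jcoeff
  rw [hd]
  rfl

lemma lead_of_jdeg {f : LaurentPolynomial ℤ} {d : ℤ} (h : jdeg f = (d : WithBot ℤ)) :
    Lead f d := by
  constructor
  · exact Finsupp.mem_support_iff.1 (Finset.mem_of_max h)
  · intro k hk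
    by_contra hne
    have hle := Finset.le_max (Finsupp.mem_support_iff.2 hne)
    rw [show ((AddMonoidAlgebra.coeff f : ℤ →₀ ℤ).support.max) = (d : WithBot ℤ) from h] at hle
    exact absurd (WithBot.coe_le_coe.1 hle) (not_le.2 hk)

/-- Base case of the induction. -/
lemma base {f g h : LaurentPolynomial ℤ} {d : ℤ}
    (hrec : ∀ k, ap h k = ap g (k - 3) - ap g (k - 1) + ap f (k - 4))
    (hg : ∀ k, d + 1 < k → ap g k = 0) (hf : ∀ k, d < k → ap f k = 0) :
    ap h (d + 4) = ap f d + ap g (d + 1) ∧ ∀ k, d + 4 < k → ap h k = 0 := by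
  constructor
  · rw [hrec (d + 4)]
    rw [show d + 4 - 3 = d + 1 by ring, show d + 4 - 1 = d + 3 by ring,
      show d + 4 - 4 = d by ring, hg (d + 3) (by linarith)]
    ring
  · intro k hk
    rw [hrec k, hg (k - 3) (by linarith), hg (k - 1) (by linarith),
      hf (k - 4) (by linarith)]
    ring

/-- Inductive step. -/
lemma step {f g h : LaurentPolynomial ℤ} {e C : ℤ}
    (hrec : ∀ k, ap h k = ap g (k - 3) - ap g (k - 1) + ap f (k - 4))
    (hgc : ap g e = C) (hgup : ∀ k, e < k → ap g k = 0)
    (hfup : ∀ k, e - 2 < k → ap f k = 0) :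
    ap h (e + 3) = C ∧ ∀ k, e + 3 < k → ap h k = 0 := by
  constructor
  · rw [hrec (e + 3)]
    rw [show e + 3 - 3 = e by ring, hgc, hgup (e + 3 - 1) (by linarith),
      hfup (e + 3 - 4) (by linarith)]
    ring
  · intro k hk
    rw [hrec k, hgup (k - 3) (by linarith), hgup (k - 1) (by linarith),
      hfup (k - 4) (by linarith)]
    ring

end JonesAux

open LaurentPolynomial in
/-- **Proposition 3.4, Case 1** (critical case, nonvanishing coefficient sum).
If `V` satisfies the Jones recurrence, `V 0 ≠ 0`, the pair `(V 0, V 1)` is critical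
(`deg V 1 = 1 + deg V 0`), and the sum `C` of the leading coefficients of `V 0` and
`V 1` is nonzero, then every pair `(V m, V (m+1))` with `m ≥ 1` is stable,
`deg V m = deg V 1 + 3(m−1)` for `m ≥ 1`, and the leading coefficient of `V m` is `C`
for `m ≥ 2`. -/
theorem jones_critical_case_one (V : ℕ → LaurentPolynomial ℤ)
    (hV : ∀ m : ℕ, V (m + 2) = (T 3 - T 1) * V (m + 1) + T 4 * V m)
    (h0 : V 0 ≠ 0)
    (hcrit : jdeg (V 1) = 1 + jdeg (V 0))
    (C : ℤ) (hC : C = jcoeff (V 0) + jcoeff (V 1)) (hC0 : C ≠ 0) :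
    (∀ m : ℕ, 1 ≤ m → 1 + jdeg (V m) < jdeg (V (m + 1))) ∧
    (∀ m : ℕ, 1 ≤ m → jdeg (V m) = jdeg (V 1) + ((3 * ((m : ℤ) - 1) : ℤ) : WithBot ℤ)) ∧
    (∀ m : ℕ, 2 ≤ m → jcoeff (V m) = C) := by
  obtain ⟨d0, hd0⟩ : ∃ d0 : ℤ, jdeg (V 0) = (d0 : WithBot ℤ) := by
    have hne : jdeg (V 0) ≠ ⊥ := by
      simp only [jdeg, ne_eq, Finset.max_eq_bot, Finsupp.support_eq_empty, AddMonoidAlgebra.coeff_eq_zero]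
      exact h0
    exact (WithBot.ne_bot_iff_exists.1 hne).imp fun d h => h.symm
  have hd1 : jdeg (V 1) = ((d0 + 1 : ℤ) : WithBot ℤ) := by
    rw [hcrit, hd0]
    norm_cast
    rw [add_comm]
  have L0 : JonesAux.Lead (V 0) d0 := JonesAux.lead_of_jdeg hd0
  have L1 : JonesAux.Lead (V 1) (d0 + 1) := JonesAux.lead_of_jdeg hd1
  have hCval : C = JonesAux.ap (V 0) d0 + JonesAux.ap (V 1) (d0 + 1) := by
    rw [hC, JonesAux.jcoeff_eq_of_lead L0, JonesAux.jcoeff_eq_of_lead L1]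
  have hrec : ∀ m : ℕ, ∀ k : ℤ, JonesAux.ap (V (m + 2)) k
      = JonesAux.ap (V (m + 1)) (k - 3) - JonesAux.ap (V (m + 1)) (k - 1)
        + JonesAux.ap (V m) (k - 4) := by
    intro m k
    rw [hV m, sub_mul, JonesAux.ap_add, JonesAux.ap_sub, JonesAux.ap_T_mul,
      JonesAux.ap_T_mul, JonesAux.ap_T_mul]
  -- main induction: for all m, V (m+2) has degree d0 + 3m + 4 with leading coeff C,
  -- and V (m+1) vanishes above d0 + 3m + 2
  have key : ∀ m : ℕ,
      (JonesAux.ap (V (m + 2)) (d0 + 3 * (m : ℤ) + 4) = C ∧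
        ∀ k, d0 + 3 * (m : ℤ) + 4 < k → JonesAux.ap (V (m + 2)) k = 0) ∧
      (∀ k, d0 + 3 * (m : ℤ) + 2 < k → JonesAux.ap (V (m + 1)) k = 0) := by
    intro m
    induction m with
    | zero =>
      have hb := JonesAux.base (hrec 0) L1.2 L0.2
      refine ⟨⟨?_, ?_⟩, ?_⟩
      · rw [show d0 + 3 * ((0 : ℕ) : ℤ) + 4 = d0 + 4 by push_cast; ring]
        rw [hb.1, hCval]
      · intro k hk
        exact hb.2 k (by push_cast at hk; linarith)
      · intro k hk
        exact L1.2 k (by push_cast at hk; linarith)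
    | succ n ih =>
      obtain ⟨⟨hc, hup⟩, hlo⟩ := ih
      have hs := JonesAux.step (hrec (n + 1)) hc hup
        (fun k hk => hlo k (by linarith))
      refine ⟨⟨?_, ?_⟩, ?_⟩
      · rw [show d0 + 3 * ((n + 1 : ℕ) : ℤ) + 4 = d0 + 3 * (n : ℤ) + 4 + 3 by
          push_cast; ring]
        exact hs.1
      · intro k hk
        exact hs.2 k (by push_cast at hk; linarith)
      · intro k hk
        exact hup k (by push_cast at hk; linarith)
  -- leads of all V (m+2)
  have LM : ∀ m : ℕ, JonesAux.Lead (V (m + 2)) (d0 + 3 * (m : ℤ) + 4) := by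
    intro m
    exact ⟨by rw [(key m).1.1]; exact hC0, (key m).1.2⟩
  have hdeg : ∀ m : ℕ, jdeg (V (m + 2)) = ((d0 + 3 * (m : ℤ) + 4 : ℤ) : WithBot ℤ) :=
    fun m => JonesAux.jdeg_eq_of_lead (LM m)
  refine ⟨?_, ?_, ?_⟩
  · -- stability
    intro m hm
    match m, hm with
    | 1, _ =>
      rw [hd1, hdeg 0]
      rw [show ((1 : WithBot ℤ)) = ((1 : ℤ) : WithBot ℤ) from rfl, ← WithBot.coe_add]
      rw [WithBot.coe_lt_coe]
      push_cast
      linarith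
    | (n + 2), _ =>
      rw [hdeg n, show n + 2 + 1 = (n + 1) + 2 by ring, hdeg (n + 1)]
      rw [show ((1 : WithBot ℤ)) = ((1 : ℤ) : WithBot ℤ) from rfl, ← WithBot.coe_add]
      rw [WithBot.coe_lt_coe]
      push_cast
      linarith
  · -- degrees
    intro m hm
    match m, hm with
    | 1, _ =>
      rw [hd1]
      norm_num
    | (n + 2), _ =>
      rw [hdeg n, hd1, ← WithBot.coe_add, WithBot.coe_inj]
      push_cast
      ring
  · -- leading coefficients
    intro m hm
    match m, hm with
    | (n + 2), _ =>
      rw [JonesAux.jcoeff_eq_of_lead (LM n), (key n).1.1]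
end

section
/- Let V : ℕ → ℤ[T,T⁻¹] satisfy the Jones recurrence V(m+2) = (T³ − T)·V(m+1) + T⁴·V(m) for all m. Suppose V(0) ≠ 0, the pair (V(0), V(1)) is critical (deg V(1) = 1 + deg V(0)), the sum of the leading coefficients of V(0) and V(1) is 0, and deg V(2) = 2 + deg V(1). Then for every m ≥ 1 the pair (V(m), V(m+1)) is stable, and for every m ≥ 2, deg V(m) = deg V(2) + 3·(m − 2). -/
open LaurentPolynomial Finset

lemma jdeg_T_mul (n : ℤ) (f : LaurentPolynomial ℤ) :
    jdeg (T n * f) = (n : WithBot ℤ) + jdeg f := by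
  unfold jdeg
  rw [show (T n : LaurentPolynomial ℤ) = AddMonoidAlgebra.single n 1 from rfl]
  rw [AddMonoidAlgebra.support_coeff_single_mul f 1 (by simp) n]
  rw [Finset.max, Finset.sup_map, Finset.max]
  rw [Finset.comp_sup_eq_sup_comp (fun x : WithBot ℤ => (n : WithBot ℤ) + x)
    (fun x y => by
      rcases le_total x y with h | h
      · rw [sup_eq_right.2 h, sup_eq_right.2 (by exact add_le_add_right h _)]
      · rw [sup_eq_left.2 h, sup_eq_left.2 (by exact add_le_add_right h _)])
    (by simp)]
  rfl

lemma jdeg_eq_bot {f : LaurentPolynomial ℤ} : jdeg f = ⊥ ↔ f = 0 := by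
  unfold jdeg
  rw [Finset.max_eq_bot, Finsupp.support_eq_empty, AddMonoidAlgebra.coeff_eq_zero]

lemma jdeg_neg (f : LaurentPolynomial ℤ) : jdeg (-f) = jdeg f := by
  unfold jdeg
  rw [show (AddMonoidAlgebra.coeff (-f) : ℤ →₀ ℤ) = -(AddMonoidAlgebra.coeff f : ℤ →₀ ℤ) from rfl,
    Finsupp.support_neg]

lemma jdeg_add_eq_left {f g : LaurentPolynomial ℤ} (h : jdeg g < jdeg f) :
    jdeg (f + g) = jdeg f := by
  have hf : jdeg f ≠ ⊥ := fun hb => by simp [hb] at h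
  obtain ⟨d, hd⟩ : ∃ d : ℤ, jdeg f = (d : WithBot ℤ) := by
    cases hfd : jdeg f with
    | bot => exact absurd hfd hf
    | coe d => exact ⟨d, rfl⟩
  apply le_antisymm
  · calc jdeg (f + g) ≤ ((AddMonoidAlgebra.coeff f : ℤ →₀ ℤ).support ∪ (AddMonoidAlgebra.coeff g : ℤ →₀ ℤ).support).max :=
        Finset.max_mono (Finsupp.support_add)
      _ = jdeg f ⊔ jdeg g := Finset.max_union
      _ = jdeg f := sup_eq_left.2 h.le
  · rw [hd, jdeg]
    apply Finset.le_max
    have hdf : d ∈ (AddMonoidAlgebra.coeff f : ℤ →₀ ℤ).support := Finset.mem_of_max hd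
    have hdg : (AddMonoidAlgebra.coeff g : ℤ →₀ ℤ) d = 0 := by
      by_contra hne
      have : (d : WithBot ℤ) ≤ jdeg g := Finset.le_max (Finsupp.mem_support_iff.2 hne)
      exact absurd (this.trans_lt h) (by rw [hd]; exact lt_irrefl _)
    rw [Finsupp.mem_support_iff] at hdf ⊢
    show (AddMonoidAlgebra.coeff f : ℤ →₀ ℤ) d + (AddMonoidAlgebra.coeff g : ℤ →₀ ℤ) d ≠ 0
    rw [hdg, add_zero]; exact hdf

lemma jdeg_poly_mul {f : LaurentPolynomial ℤ} (hf : f ≠ 0) :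
    jdeg ((T 3 - T 1) * f) = 3 + jdeg f := by
  have h1 : (T 3 - T 1) * f = T 3 * f + (-(T 1 * f)) := by ring
  rw [h1, jdeg_add_eq_left]
  · rw [jdeg_T_mul]; norm_cast
  rw [jdeg_neg, jdeg_T_mul, jdeg_T_mul]
  obtain ⟨d, hd⟩ : ∃ d : ℤ, jdeg f = (d : WithBot ℤ) := by
    cases hfd : jdeg f with
    | bot => exact absurd (jdeg_eq_bot.1 hfd) hf
    | coe d => exact ⟨d, rfl⟩
  rw [hd, ← WithBot.coe_add, ← WithBot.coe_add, WithBot.coe_lt_coe]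
  omega

lemma jdeg_step {f g : LaurentPolynomial ℤ} (h : 1 + jdeg f < jdeg g) :
    jdeg ((T 3 - T 1) * g + T 4 * f) = 3 + jdeg g := by
  have hg : g ≠ 0 := by
    rintro rfl
    rw [jdeg_eq_bot.2 rfl] at h
    exact not_lt_bot h
  rw [jdeg_add_eq_left, jdeg_poly_mul hg]
  rw [jdeg_poly_mul hg, jdeg_T_mul]
  have h4 : ((4:ℤ) : WithBot ℤ) + jdeg f = 3 + (1 + jdeg f) := by
    rw [← add_assoc]; norm_num
  rw [h4]
  exact WithBot.add_lt_add_left (by simp) h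

open LaurentPolynomial in
/-- **Proposition 3.4, Case 2a** (critical case, vanishing coefficient sum, degree
jump by 2). If `V` satisfies the Jones recurrence, `V 0 ≠ 0`, the pair `(V 0, V 1)`
is critical, the sum of the leading coefficients of `V 0` and `V 1` is `0`, and
`deg V 2 = 2 + deg V 1`, then every pair `(V m, V (m+1))` with `m ≥ 1` is stable and
`deg V m = deg V 2 + 3(m−2)` for `m ≥ 2`. -/
theorem jones_critical_case_two_a (V : ℕ → LaurentPolynomial ℤ)
    (hV : ∀ m : ℕ, V (m + 2) = (T 3 - T 1) * V (m + 1) + T 4 * V m)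
    (h0 : V 0 ≠ 0)
    (hcrit : jdeg (V 1) = 1 + jdeg (V 0))
    (hC : jcoeff (V 0) + jcoeff (V 1) = 0)
    (h2 : jdeg (V 2) = 2 + jdeg (V 1)) :
    (∀ m : ℕ, 1 ≤ m → 1 + jdeg (V m) < jdeg (V (m + 1))) ∧
    (∀ m : ℕ, 2 ≤ m → jdeg (V m) = jdeg (V 2) + ((3 * ((m : ℤ) - 2) : ℤ) : WithBot ℤ)) := by
  obtain ⟨d0, hd0⟩ : ∃ d : ℤ, jdeg (V 0) = (d : WithBot ℤ) := by
    cases hfd : jdeg (V 0) with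
    | bot => exact absurd (jdeg_eq_bot.1 hfd) h0
    | coe d => exact ⟨d, rfl⟩
  have hd1 : jdeg (V 1) = ((1 + d0 : ℤ) : WithBot ℤ) := by
    rw [hcrit, hd0]; norm_cast
  have hd2 : jdeg (V 2) = ((3 + d0 : ℤ) : WithBot ℤ) := by
    rw [h2, hd1, show (2:WithBot ℤ) = ((2:ℤ):WithBot ℤ) from rfl, ← WithBot.coe_add]
    exact WithBot.coe_inj.2 (by ring)
  have key : ∀ m : ℕ, (1 + jdeg (V (m + 1)) < jdeg (V (m + 2))) ∧
      jdeg (V (m + 2)) = ((3 + d0 + 3 * m : ℤ) : WithBot ℤ) := by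
    intro m
    induction m with
    | zero =>
      refine ⟨?_, by rw [hd2]; exact WithBot.coe_inj.2 (by push_cast; ring)⟩
      rw [hd1, hd2, ← WithBot.coe_one, ← WithBot.coe_add, WithBot.coe_lt_coe]
      omega
    | succ m ih =>
      have hstep : jdeg (V (m + 3)) = 3 + jdeg (V (m + 2)) := by
        have := hV (m + 1)
        rw [show m + 1 + 2 = m + 3 from rfl, show m + 1 + 1 = m + 2 from rfl] at this
        rw [this]
        exact jdeg_step ih.1
      have hval : jdeg (V (m + 3)) = ((3 + d0 + 3 * (m + 1 : ℕ) : ℤ) : WithBot ℤ) := by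
        rw [hstep, ih.2, show (3:WithBot ℤ) = ((3:ℤ):WithBot ℤ) from rfl, ← WithBot.coe_add]
        exact WithBot.coe_inj.2 (by push_cast; ring)
      constructor
      · rw [ih.2, hval, ← WithBot.coe_one, ← WithBot.coe_add, WithBot.coe_lt_coe]
        push_cast
        omega
      · exact hval
  constructor
  · rintro (_ | m) hm
    · omega
    · exact (key m).1
  · rintro (_ | _ | m) hm
    · omega
    · omega
    · rw [(key m).2, hd2]
      rw [← WithBot.coe_add]
      exact WithBot.coe_inj.2 (by push_cast; ring)
end
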